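/- Let $A$ be a local finite-dimensional $k$-algebra with $A/J_A\cong k$, and $X$ a nonzero $(A,k)$-bimodule (i.e. an $A^{op}$-module) with a single generator $h$, so $X=Ah$. Let $x=(x_1,\dots,x_t)\in X^t$ be such that $X^t = A\cdot(x_1,\dots,x_t) + (x_1,\dots,x_t)\cdot M_t(k)$ (rigidity condition). Then, after replacing $x$ by $a\cdot x\cdot g$ for suitable $a\in A^\times$ and $g\in GL_t(k)$, one can assume $x_1=h$ and $x_i\in J_A h$ for $2\le i\le t$, and moreover $(J_A X)^{t-1} = A\cdot(x_2,\dots,x_t) + (x_2,\dots,x_t)\cdot M_{t-1}(k)$. -/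

import Mathlib

section aux

lemma aux_isUnit_of_mul_eq_one (k : Type*) {A : Type*} [Field k] [Ring A] [Algebra k A]
    [FiniteDimensional k A] {a b : A} (hab : a * b = 1) : IsUnit a := by
  have hs : Function.Surjective (LinearMap.mulLeft k a) := fun y =>
    ⟨b * y, by simp [LinearMap.mulLeft_apply, ← mul_assoc, hab]⟩
  have hi : Function.Injective (LinearMap.mulLeft k a) :=
    (LinearMap.injective_iff_surjective).mpr hs
  have hba : b * a = 1 := by
    have : (LinearMap.mulLeft k a) (b * a) = (LinearMap.mulLeft k a) 1 := by
      simp [LinearMap.mulLeft_apply, ← mul_assoc, hab]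
    exact hi this
  exact ⟨⟨a, b, hab, hba⟩, rfl⟩

lemma aux_isUnit_of_one_eq_mul (k : Type*) {A : Type*} [Field k] [Ring A] [Algebra k A]
    [FiniteDimensional k A] {a b : A} (hab : b * a = 1) : IsUnit a := by
  obtain ⟨u, hu⟩ := aux_isUnit_of_mul_eq_one k hab
  have : a = ↑u⁻¹ * (↑u * a) := by rw [← mul_assoc]; simp
  rw [hu, hab, mul_one] at this
  exact this ▸ u⁻¹.isUnit

lemma aux_nonunit_add {A : Type*} [Ring A] [IsLocalRing A] {a b : A}
    (ha : ¬ IsUnit a) (hb : ¬ IsUnit b) : ¬ IsUnit (a + b) := by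
  rintro ⟨u, hu⟩
  have h1 : (↑u⁻¹ * a) + (↑u⁻¹ * b) = 1 := by rw [← mul_add, ← hu]; simp
  rcases IsLocalRing.isUnit_or_isUnit_of_add_one h1 with h | h
  · have ha' : a = ↑u * (↑u⁻¹ * a) := by rw [← mul_assoc]; simp
    exact ha (ha' ▸ u.isUnit.mul h)
  · have hb' : b = ↑u * (↑u⁻¹ * b) := by rw [← mul_assoc]; simp
    exact hb (hb' ▸ u.isUnit.mul h)

lemma aux_mul_nonunit (k : Type*) {A : Type*} [Field k] [Ring A] [Algebra k A]
    [FiniteDimensional k A] {a b : A} (hb : ¬ IsUnit b) : ¬ IsUnit (a * b) := by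
  rintro ⟨u, hu⟩
  exact hb (aux_isUnit_of_one_eq_mul k (show (↑u⁻¹ * a) * b = 1 by rw [mul_assoc, ← hu]; simp))

lemma aux_nonunit_mul (k : Type*) {A : Type*} [Field k] [Ring A] [Algebra k A]
    [FiniteDimensional k A] {a b : A} (ha : ¬ IsUnit a) : ¬ IsUnit (a * b) := by
  rintro ⟨u, hu⟩
  exact ha (aux_isUnit_of_mul_eq_one k (show a * (b * ↑u⁻¹) = 1 by rw [← mul_assoc, ← hu]; simp))

lemma aux_sum_nonunit {A : Type*} [Ring A] [IsLocalRing A] {ι : Type*} (s : Finset ι)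
    (f : ι → A) (hf : ∀ i ∈ s, ¬ IsUnit (f i)) : ¬ IsUnit (∑ i ∈ s, f i) := by
  classical
  induction s using Finset.induction_on with
  | empty => simpa using not_isUnit_zero
  | insert a s hx ih =>
      rw [Finset.sum_insert hx]
      exact aux_nonunit_add (hf _ (Finset.mem_insert_self _ _))
        (ih fun i hi => hf i (Finset.mem_insert_of_mem hi))

lemma aux_unit_sub_nonunit {A : Type*} [Ring A] [IsLocalRing A] {e d : A}
    (he : IsUnit e) (hd : ¬ IsUnit d) : IsUnit (e - d) := by
  by_contra hc
  exact aux_nonunit_add hc hd (by simpa using he)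

lemma aux_unit_smul_eq_zero {A X : Type*} [Ring A] [AddCommGroup X] [Module A X]
    {e : A} (he : IsUnit e) {v : X} (hv : e • v = 0) : v = 0 := by
  obtain ⟨w, rfl⟩ := he
  have := congrArg (fun z : X => (↑w⁻¹ : A) • z) hv
  simpa [← mul_smul] using this

end aux

section T

variable {k A X : Type*} [Field k] [Ring A] [Algebra k A] [AddCommGroup X] [Module A X]
variable {n : Type*} [Fintype n]

/-- right action of a matrix on a tuple -/
def auxT (k A : Type*) {X n : Type*} [Field k] [Ring A] [Algebra k A]
    [AddCommGroup X] [Module A X] [Fintype n] (g : Matrix n n k) (w : n → X) : n → X :=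
  fun j => ∑ i, algebraMap k A (g i j) • w i

lemma auxT_comp (g g' : Matrix n n k) (w : n → X) :
    auxT k A g (auxT k A g' w) = auxT k A (g' * g) w := by
  funext j
  simp only [auxT, Matrix.mul_apply, Finset.smul_sum, map_sum, Finset.sum_smul, smul_smul,
    ← map_mul]
  rw [Finset.sum_comm]
  refine Finset.sum_congr rfl fun l _ => Finset.sum_congr rfl fun i _ => ?_
  rw [mul_comm]

lemma auxT_one [DecidableEq n] (w : n → X) : auxT k A (1 : Matrix n n k) w = w := by
  funext j
  simp [auxT, Matrix.one_apply, apply_ite (algebraMap k A), ite_smul, Finset.sum_ite_eq,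
    Finset.sum_ite_eq']

lemma auxT_smul (g : Matrix n n k) (a : A) (w : n → X) :
    auxT k A g (fun j => a • w j) = fun j => a • auxT k A g w j := by
  funext j
  simp [auxT, Finset.smul_sum, smul_smul, Algebra.commutes]

lemma auxT_add (g : Matrix n n k) (w v : n → X) :
    auxT k A g (fun j => w j + v j) = fun j => auxT k A g w j + auxT k A g v j := by
  funext j
  simp [auxT, smul_add, Finset.sum_add_distrib]

lemma auxT_sub (g g' : Matrix n n k) (w : n → X) :
    auxT k A (g - g') w = fun j => auxT k A g w j - auxT k A g' w j := by
  funext j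
  simp [auxT, Matrix.sub_apply, map_sub, sub_smul, Finset.sum_sub_distrib]

/-- permutation matrix -/
def auxP (k : Type*) {n : Type*} [Field k] [DecidableEq n] (σ : Equiv.Perm n) : Matrix n n k :=
  Matrix.of fun i j => if i = σ j then 1 else 0

def auxPi (k : Type*) {n : Type*} [Field k] [DecidableEq n] (σ : Equiv.Perm n) : Matrix n n k :=
  Matrix.of fun i j => if σ i = j then 1 else 0

/-- elementary row-`e` matrix -/
def auxN (k : Type*) {n : Type*} [Field k] [DecidableEq n] (e : n) (lam : n → k) :
    Matrix n n k :=
  Matrix.of fun i j => if i = e then (if j = e then 0 else lam j) else 0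

variable [DecidableEq n]

lemma auxP_mul_auxPi (σ : Equiv.Perm n) : auxP k σ * auxPi k σ = 1 := by
  ext i j
  rw [Matrix.mul_apply]
  rw [Fintype.sum_equiv σ _
      (fun m => (if i = m then 1 else 0) * (if m = j then (1 : k) else 0))
      (fun l => by simp [auxP, auxPi])]
  simp [ite_mul, zero_mul, one_mul, Finset.sum_ite_eq, Matrix.one_apply]

lemma auxPi_mul_auxP (σ : Equiv.Perm n) : auxPi k σ * auxP k σ = 1 := by
  ext i j
  rw [Matrix.mul_apply]
  simp [auxPi, auxP, ite_mul, zero_mul, one_mul, Finset.sum_ite_eq, Matrix.one_apply,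
    EmbeddingLike.apply_eq_iff_eq]

lemma auxN_mul_auxN (e : n) (lam : n → k) : auxN k e lam * auxN k e lam = 0 := by
  ext i j
  rw [Matrix.mul_apply]
  refine Finset.sum_eq_zero fun l _ => ?_
  by_cases hl : l = e <;> simp [auxN, hl]

lemma auxT_P (σ : Equiv.Perm n) (w : n → X) :
    auxT k A (auxP k σ) w = fun j => w (σ j) := by
  funext j
  simp [auxT, auxP, apply_ite (algebraMap k A), ite_smul, Finset.sum_ite_eq,
    Finset.sum_ite_eq']

lemma auxT_N (e : n) (lam : n → k) (w : n → X) :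
    auxT k A (auxN k e lam) w
      = fun j => (if j = e then 0 else algebraMap k A (lam j)) • w e := by
  funext j
  simp [auxT, auxN, apply_ite (algebraMap k A), ite_smul, Finset.sum_ite_eq,
    Finset.sum_ite_eq']

lemma aux_transfer (x : n → X)
    (hrigid : ∀ y : n → X, ∃ (c : A) (m : Matrix n n k),
      ∀ j, y j = c • x j + auxT k A m x j)
    (u : Aˣ) (G : (Matrix n n k)ˣ) (y : n → X) :
    ∃ (c : A) (m : Matrix n n k), ∀ j,
      y j = c • ((u : A) • auxT k A (G : Matrix n n k) x j)
        + auxT k A m (fun i => (u : A) • auxT k A (G : Matrix n n k) x i) j := by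
  obtain ⟨c, m, hz⟩ := hrigid (fun j => ((u⁻¹ : Aˣ) : A) • auxT k A ((G⁻¹ : (Matrix n n k)ˣ) : Matrix n n k) y j)
  refine ⟨(u : A) * c * ((u⁻¹ : Aˣ) : A), ((G⁻¹ : (Matrix n n k)ˣ) : Matrix n n k) * m * (G : Matrix n n k),
    fun j => ?_⟩
  have h1 : (fun j' => ((u⁻¹ : Aˣ) : A) • auxT k A ((G⁻¹ : (Matrix n n k)ˣ) : Matrix n n k) y j')
      = fun j' => c • x j' + auxT k A m x j' := funext hz
  have hy : y j = (u : A) • auxT k A (G : Matrix n n k) (fun j' => c • x j' + auxT k A m x j') j := by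
    rw [← h1]
    simp only [auxT_smul, auxT_comp, Units.inv_mul, auxT_one, smul_smul, Units.mul_inv, one_smul]
  rw [hy]
  simp only [auxT_add, auxT_smul, auxT_comp, smul_add, smul_smul, mul_assoc,
    Units.inv_mul, Units.mul_inv, Units.mul_inv_cancel_left, Units.inv_mul_cancel_left,
    mul_one, one_mul]

end T


/-- Let `A` be a local finite-dimensional `k`-algebra with residue field
`k`, and `X` a nonzero `A`-module generated by a single element `h` (so `X = A h`).
Let `x = (x 0, …, x t) ∈ X^(t+1)` satisfy the rigidity condition
`X^(t+1) = A·x + x·M_(t+1)(k)`.  Then after replacing `x` by `a • x • g` for suitable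
`a ∈ Aˣ` and `g ∈ GL_(t+1)(k)` one may assume `x 0 = h` and `x j ∈ J_A h` for `j ≥ 1`,
and moreover `(J_A X)^t = A·(x 1,…,x t) + (x 1,…,x t)·M_t(k)`. -/
theorem stmt_6 {k A X : Type*} [Field k] [Ring A] [Algebra k A] [FiniteDimensional k A]
    [IsLocalRing A] [AddCommGroup X] [Module A X]
    -- residue field `k` : every element of `A` is a scalar modulo the radical (= nonunits)
    (hres : ∀ a : A, ∃ c : k, ¬ IsUnit (a - algebraMap k A c))
    (h : X) (hh : h ≠ 0) (hgen : ∀ y : X, ∃ a : A, y = a • h)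
    (t : ℕ) (x : Fin (t + 1) → X)
    (hrigid : ∀ y : Fin (t + 1) → X,
      ∃ (c : A) (m : Matrix (Fin (t + 1)) (Fin (t + 1)) k),
        ∀ j, y j = c • x j + ∑ i, algebraMap k A (m i j) • x i) :
    ∃ (a : Aˣ) (g : GL (Fin (t + 1)) k),
      -- the transformed tuple `x' = a • (x · g)`
      (fun j => (a : A) • ∑ i, algebraMap k A ((g : Matrix (Fin (t + 1)) (Fin (t + 1)) k) i j) • x i) 0 = h ∧
      (∀ j : Fin (t + 1), j ≠ 0 →
        ∃ c : A, ¬ IsUnit c ∧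
          (fun j => (a : A) • ∑ i, algebraMap k A ((g : Matrix (Fin (t + 1)) (Fin (t + 1)) k) i j) • x i) j = c • h) ∧
      -- rigidity descends to the tail `(x' 1, …, x' t)` inside `J_A X`
      (∀ y : Fin t → X,
        (∀ j, y j ∈ Submodule.span A {z : X | ∃ (c : A) (w : X), ¬ IsUnit c ∧ z = c • w}) →
        ∃ (c : A) (m : Matrix (Fin t) (Fin t) k),
          ∀ j : Fin t, y j = c •
              ((fun j => (a : A) • ∑ i, algebraMap k A ((g : Matrix (Fin (t + 1)) (Fin (t + 1)) k) i j) • x i) j.succ)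
            + ∑ i : Fin t, algebraMap k A (m i j) •
              ((fun j => (a : A) • ∑ i, algebraMap k A ((g : Matrix (Fin (t + 1)) (Fin (t + 1)) k) i j) • x i) i.succ)) := by
    classical
  choose aa haa using hgen
  set ax : Fin (t + 1) → A := fun i => aa (x i) with haxdef
  have hax : ∀ i, x i = ax i • h := fun i => haa (x i)
  -- Step 1: some coefficient is a unit
  have hex : ∃ i, IsUnit (ax i) := by
    by_contra h0
    push_neg at h0
    obtain ⟨c, m, hcm⟩ := hrigid fun _ => h
    have h1 := hcm 0
    simp only [hax, smul_smul] at h1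
    rw [← Finset.sum_smul, ← add_smul] at h1
    set b := c * ax 0 + ∑ i, algebraMap k A (m i 0) * ax i with hbdef
    have hb : ¬ IsUnit b :=
      aux_nonunit_add (aux_mul_nonunit k (h0 0))
        (aux_sum_nonunit _ _ fun i _ => aux_mul_nonunit k (h0 i))
    have h3 : IsUnit (1 - b) := by
      by_contra hc
      exact (aux_nonunit_add hc hb) (by simpa using isUnit_one)
    exact hh (aux_unit_smul_eq_zero h3 (by rw [sub_smul, one_smul, ← h1, sub_self]))
  obtain ⟨i0, v, hv⟩ := hex
  set σ : Equiv.Perm (Fin (t + 1)) := Equiv.swap 0 i0 with hσdef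
  choose lam hlam using fun j => hres (((v⁻¹ : Aˣ) : A) * ax (σ j))
  set G : GL (Fin (t + 1)) k :=
    ⟨auxP k σ * (1 - auxN k (0 : Fin (t + 1)) lam),
     (1 + auxN k (0 : Fin (t + 1)) lam) * auxPi k σ,
     by
      rw [mul_assoc, ← mul_assoc (1 - auxN k (0 : Fin (t + 1)) lam)]
      rw [sub_mul, one_mul, mul_add, mul_one, auxN_mul_auxN, add_zero, add_sub_cancel_right,
        one_mul, auxP_mul_auxPi],
     by
      rw [mul_assoc, ← mul_assoc (auxPi k σ), auxPi_mul_auxP, one_mul]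
      rw [mul_sub, mul_one, add_mul, one_mul, auxN_mul_auxN, add_zero, add_sub_cancel_right]⟩
    with hGdef
  -- entrywise description of the transformed tuple
  have hTG : ∀ j, auxT k A ((G : Matrix (Fin (t + 1)) (Fin (t + 1)) k)) x j
      = x (σ j) - (if j = 0 then 0 else algebraMap k A (lam j)) • x i0 := by
    intro j
    show auxT k A (auxP k σ * (1 - auxN k (0 : Fin (t + 1)) lam)) x j = _
    rw [← auxT_comp, auxT_P]
    simp only [auxT_sub, auxT_one, auxT_N]
    rw [Equiv.swap_apply_left]
  have hsum : ∀ j, (∑ i, algebraMap k A ((G : Matrix (Fin (t + 1)) (Fin (t + 1)) k) i j) • x i)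
      = x (σ j) - (if j = 0 then 0 else algebraMap k A (lam j)) • x i0 := fun j => hTG j
  set x' : Fin (t + 1) → X :=
    fun j => ((v⁻¹ : Aˣ) : A) • ∑ i, algebraMap k A ((G : Matrix (Fin (t + 1)) (Fin (t + 1)) k) i j) • x i
    with hx'def
  have hx'0 : x' 0 = h := by
    rw [hx'def]
    simp only
    rw [hsum 0, if_pos rfl, zero_smul, sub_zero, Equiv.swap_apply_left, hax i0, ← hv, smul_smul,
      Units.inv_mul, one_smul]
  have hx'ne : ∀ j : Fin (t + 1), j ≠ 0 →
      x' j = (((v⁻¹ : Aˣ) : A) * ax (σ j) - algebraMap k A (lam j)) • h := by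
    intro j hj
    rw [hx'def]
    simp only
    rw [hsum j, if_neg hj, hax (σ j), hax i0, ← hv]
    simp only [smul_sub, smul_smul, sub_smul]
    congr 2
    rw [Algebra.commutes, Units.inv_mul_cancel_left]
  have hx'mem : ∀ j : Fin (t + 1), j ≠ 0 → ∃ cc : A, ¬ IsUnit cc ∧ x' j = cc • h :=
    fun j hj => ⟨_, hlam j, hx'ne j hj⟩
  -- the submodule J_A h
  set TT : Submodule A X :=
    { carrier := {z | ∃ d : A, ¬ IsUnit d ∧ z = d • h}
      add_mem' := by
        rintro p q ⟨d1, hd1, rfl⟩ ⟨d2, hd2, rfl⟩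
        exact ⟨d1 + d2, aux_nonunit_add hd1 hd2, (add_smul d1 d2 h).symm⟩
      zero_mem' := ⟨0, not_isUnit_zero, (zero_smul A h).symm⟩
      smul_mem' := by
        rintro r p ⟨d, hd, rfl⟩
        exact ⟨r * d, aux_mul_nonunit k hd, (mul_smul r d h).symm⟩ } with hTTdef
  have hspan : Submodule.span A {z : X | ∃ (c : A) (w : X), ¬ IsUnit c ∧ z = c • w} ≤ TT := by
    rw [Submodule.span_le]
    rintro z ⟨c, w, hc, rfl⟩
    exact ⟨c * aa w, aux_nonunit_mul k hc, by rw [mul_smul, ← haa w]⟩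
  -- rigidity in auxT form
  have hrig2 : ∀ y : Fin (t + 1) → X, ∃ (c : A) (m : Matrix (Fin (t + 1)) (Fin (t + 1)) k),
      ∀ j, y j = c • x j + auxT k A m x j := hrigid
  refine ⟨v⁻¹, G, hx'0, hx'mem, ?_⟩
  intro y hy
  obtain ⟨c, m, hcm⟩ := aux_transfer x hrig2 v⁻¹ G (Fin.cases 0 y)
  refine ⟨c, Matrix.of fun i j => m i.succ j.succ, fun j => ?_⟩
  have hj' : y j = c • x' j.succ + ∑ i : Fin (t + 1), algebraMap k A (m i j.succ) • x' i := by
    have := hcm j.succ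
    rw [Fin.cases_succ] at this
    exact this
  rw [Fin.sum_univ_succ, hx'0] at hj'
  have hmem : algebraMap k A (m 0 j.succ) • h ∈ TT := by
    have h5 : algebraMap k A (m 0 j.succ) • h
        = y j - c • x' j.succ - ∑ i : Fin t, algebraMap k A (m i.succ j.succ) • x' i.succ := by
      rw [hj']; abel
    rw [h5]
    refine sub_mem (sub_mem (hspan (hy j)) ?_) ?_
    · obtain ⟨cc, hcc, hcceq⟩ := hx'mem j.succ (Fin.succ_ne_zero j)
      exact ⟨c * cc, aux_mul_nonunit k hcc, by rw [hcceq, smul_smul]⟩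
    · refine Submodule.sum_mem TT fun i _ => ?_
      obtain ⟨cc, hcc, hcceq⟩ := hx'mem i.succ (Fin.succ_ne_zero i)
      exact ⟨algebraMap k A (m i.succ j.succ) * cc, aux_mul_nonunit k hcc,
        by rw [hcceq, smul_smul]⟩
  obtain ⟨d, hd, hdeq⟩ : ∃ d : A, ¬ IsUnit d ∧ algebraMap k A (m 0 j.succ) • h = d • h := hmem
  have hm0 : m 0 j.succ = 0 := by
    by_contra hne
    have hu : IsUnit (algebraMap k A (m 0 j.succ) - d) :=
      aux_unit_sub_nonunit ((isUnit_iff_ne_zero.mpr hne).map (algebraMap k A)) hd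
    have h0' : (algebraMap k A (m 0 j.succ) - d) • h = 0 := by
      rw [sub_smul, hdeq, sub_self]
    exact hh (aux_unit_smul_eq_zero hu h0')
  rw [hm0] at hj'
  simp only [map_zero, zero_smul, zero_add] at hj'
  exact hj'
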